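/- arXiv:1409.6640 — 8 statements merged into one kernel-verified Lean document; each statement's English description precedes it below -/
import Mathlib

section
/- For any two separations (edge sets) X and Y of a graph G, |L(X,Y)| + |L(X^∁,Y^∁)| = |∂(X)| + |∂(Y)|, where all boundaries are finite. -/
namespace Paper

variable {V : Type*} {ι : Type*}

def edgeVerts (X : Set (Sym2 V)) : Set V := {v | ∃ e ∈ X, v ∈ e}

def ecompl (G : SimpleGraph V) (X : Set (Sym2 V)) : Set (Sym2 V) := G.edgeSet \ X

def bdry (G : SimpleGraph V) (X : Set (Sym2 V)) : Set V :=
  {v | (∃ e ∈ X, v ∈ e) ∧ ∃ e ∈ ecompl G X, v ∈ e}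

def Nested (G : SimpleGraph V) (X Y : Set (Sym2 V)) : Prop :=
  X ⊆ Y ∨ ecompl G X ⊆ Y ∨ Y ⊆ X ∨ Y ⊆ ecompl G X

def ReachOutside (G : SimpleGraph V) (S : Set V) (u v : V) : Prop :=
  ∃ p : G.Walk u v, ∀ x ∈ p.support, x ∉ S

def IsCompOutside (G : SimpleGraph V) (S : Set V) (C : Set V) : Prop :=
  ∃ v, v ∉ S ∧ C = {u | ReachOutside G S u v}

def sEdges (G : SimpleGraph V) (C : Set V) : Set (Sym2 V) :=
  {e | e ∈ G.edgeSet ∧ ∃ v ∈ C, v ∈ e}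

def IsRay (G : SimpleGraph V) (f : ℕ → V) : Prop :=
  Function.Injective f ∧ ∀ n, G.Adj (f n) (f (n + 1))

def RayEquiv (G : SimpleGraph V) (f g : ℕ → V) : Prop :=
  ∀ S : Set V, S.Finite → ∃ N, ∀ i ≥ N, ∀ j ≥ N, ReachOutside G S (f i) (g j)

def LivesIn (f : ℕ → V) (X : Set (Sym2 V)) : Prop :=
  ∃ N, ∀ n ≥ N, f n ∈ edgeVerts X

def Dominates (G : SimpleGraph V) (v : V) (f : ℕ → V) : Prop :=
  ∃ (g : ℕ → ℕ) (p : (k : ℕ) → G.Walk v (f (g k))),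
    StrictMono g ∧ (∀ k, (p k).IsPath) ∧
    ∀ k l, k ≠ l → ∀ x, x ∈ (p k).support → x ∈ (p l).support → x = v


def Lset (G : SimpleGraph V) (X Y : Set (Sym2 V)) : Set V :=
  (edgeVerts X ∩ edgeVerts Y) ∩ (edgeVerts (ecompl G X) ∪ edgeVerts (ecompl G Y))

theorem stmt0 (G : SimpleGraph V) (X Y : Set (Sym2 V))
    (hX : X ⊆ G.edgeSet) (hY : Y ⊆ G.edgeSet)
    (hfX : (bdry G X).Finite) (hfY : (bdry G Y).Finite) :
    (Lset G X Y).ncard + (Lset G (ecompl G X) (ecompl G Y)).ncard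
      = (bdry G X).ncard + (bdry G Y).ncard := by

  have hccX : ecompl G (ecompl G X) = X := Set.diff_diff_cancel_left hX
  have hccY : ecompl G (ecompl G Y) = Y := Set.diff_diff_cancel_left hY
  -- cover lemma
  have cover : ∀ (Z : Set (Sym2 V)) (e : Sym2 V), e ∈ G.edgeSet → ∀ v ∈ e,
      v ∈ edgeVerts Z ∪ edgeVerts (ecompl G Z) := by
    intro Z e he v hv
    by_cases h : e ∈ Z
    · exact Or.inl ⟨e, h, hv⟩
    · exact Or.inr ⟨e, ⟨he, h⟩, hv⟩
  have hbX : bdry G X = edgeVerts X ∩ edgeVerts (ecompl G X) := rfl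
  have hbY : bdry G Y = edgeVerts Y ∩ edgeVerts (ecompl G Y) := rfl
  set L1 := Lset G X Y with hL1
  set L2 := Lset G (ecompl G X) (ecompl G Y) with hL2
  have hUnion : L1 ∪ L2 = bdry G X ∪ bdry G Y := by
    ext v
    simp only [hL1, hL2, Lset, hccX, hccY, hbX, hbY, Set.mem_union, Set.mem_inter_iff]
    constructor
    · rintro (⟨⟨ha, hb⟩, (ha' | hb')⟩ | ⟨⟨ha', hb'⟩, (ha | hb)⟩)
      · exact Or.inl ⟨ha, ha'⟩
      · exact Or.inr ⟨hb, hb'⟩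
      · exact Or.inl ⟨ha, ha'⟩
      · exact Or.inr ⟨hb, hb'⟩
    · rintro (⟨ha, ha'⟩ | ⟨hb, hb'⟩)
      · obtain ⟨e, heX, hve⟩ := ha
        rcases cover Y e (hX heX) v hve with hb | hb'
        · exact Or.inl ⟨⟨⟨e, heX, hve⟩, hb⟩, Or.inl ha'⟩
        · exact Or.inr ⟨⟨ha', hb'⟩, Or.inl ⟨e, heX, hve⟩⟩
      · obtain ⟨e, heY, hve⟩ := hb
        rcases cover X e (hY heY) v hve with ha | ha'
        · exact Or.inl ⟨⟨ha, ⟨e, heY, hve⟩⟩, Or.inr hb'⟩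
        · exact Or.inr ⟨⟨ha', hb'⟩, Or.inr ⟨e, heY, hve⟩⟩
  have hInter : L1 ∩ L2 = bdry G X ∩ bdry G Y := by
    ext v
    simp only [hL1, hL2, Lset, hccX, hccY, hbX, hbY, Set.mem_union, Set.mem_inter_iff]
    tauto
  have hsub1 : L1 ⊆ bdry G X ∪ bdry G Y := hUnion ▸ Set.subset_union_left
  have hsub2 : L2 ⊆ bdry G X ∪ bdry G Y := hUnion ▸ Set.subset_union_right
  have hf : (bdry G X ∪ bdry G Y).Finite := hfX.union hfY
  have hf1 : L1.Finite := hf.subset hsub1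
  have hf2 : L2.Finite := hf.subset hsub2
  have e1 := Set.ncard_union_add_ncard_inter L1 L2 hf1 hf2
  have e2 := Set.ncard_union_add_ncard_inter (bdry G X) (bdry G Y) hfX hfY
  rw [hUnion, hInter] at e1
  omega


end Paper
end

section
/- Let X and Y be separations of a graph G such that there is a connected component C of G − ∂(X) with s_C = X (i.e., X is exactly the set of edges with an endvertex in C), and such that C contains no vertex of ∂(Y). Then X and Y are nested, i.e., one of X ⊆ Y, X ⊆ Y^∁, X^∁ ⊆ Y, X^∁ ⊆ Y^∁ holds. -/
namespace Paper

variable {V : Type*} {ι : Type*}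

lemma touch_aux {V : Type*} (G : SimpleGraph V) (Y : Set (Sym2 V)) (C : Set V)
    (hdisj : C ∩ bdry G Y = ∅) :
    ∀ {a b : V} (p : G.Walk a b), (∀ x ∈ p.support, x ∈ C) →
      (∃ e ∈ Y, a ∈ e) → ∃ e ∈ Y, b ∈ e := by
  intro a b p
  induction p with
  | nil => exact fun _ h => h
  | @cons a c b h q ih =>
    intro hsup ha
    by_cases he : s(a, c) ∈ Y
    · exact ih (fun x hx => hsup x (by simp [hx])) ⟨s(a, c), he, by simp⟩
    · exfalso
      have haB : a ∈ bdry G Y :=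
        ⟨ha, ⟨s(a, c), ⟨G.mem_edgeSet.mpr h, he⟩, by simp⟩⟩
      have haC : a ∈ C := hsup a (by simp)
      exact Set.eq_empty_iff_forall_notMem.mp hdisj a ⟨haC, haB⟩

theorem stmt1 (G : SimpleGraph V) (X Y : Set (Sym2 V)) (C : Set V)
    (hX : X ⊆ G.edgeSet) (hY : Y ⊆ G.edgeSet)
    (hC : IsCompOutside G (bdry G X) C)
    (hsC : sEdges G C = X)
    (hdisj : C ∩ bdry G Y = ∅) :
    X ⊆ Y ∨ X ⊆ ecompl G Y ∨ ecompl G X ⊆ Y ∨ ecompl G X ⊆ ecompl G Y := by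
  classical
  obtain ⟨v₀, hv₀, hCeq⟩ := hC
  -- every vertex on a walk avoiding bdry G X ending at v₀ is in C
  have memC : ∀ {u : V} (p : G.Walk u v₀), (∀ x ∈ p.support, x ∉ bdry G X) →
      ∀ x ∈ p.support, x ∈ C := by
    intro u p hp x hx
    rw [hCeq]
    exact ⟨p.dropUntil x hx, fun y hy => hp y (SimpleGraph.Walk.support_dropUntil_subset p hx hy)⟩
  by_contra hcon
  push_neg at hcon
  obtain ⟨h1, h2, -, -⟩ := hcon
  obtain ⟨e₂, he₂X, he₂Y⟩ := Set.not_subset.mp h1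
  obtain ⟨e₁, he₁X, he₁c⟩ := Set.not_subset.mp h2
  have he₁Y : e₁ ∈ Y := by
    by_contra h
    exact he₁c ⟨hX he₁X, h⟩
  have he₂c : e₂ ∈ ecompl G Y := ⟨hX he₂X, he₂Y⟩
  obtain ⟨-, u₁, hu₁C, hu₁e⟩ := hsC ▸ he₁X
  obtain ⟨-, u₂, hu₂C, hu₂e⟩ := hsC ▸ he₂X
  obtain ⟨p₁, hp₁⟩ := hCeq ▸ hu₁C
  obtain ⟨p₂, hp₂⟩ := hCeq ▸ hu₂C
  set q : G.Walk u₁ u₂ := p₁.append p₂.reverse with hq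
  have hqC : ∀ x ∈ q.support, x ∈ C := by
    intro x hx
    rw [hq, SimpleGraph.Walk.mem_support_append_iff] at hx
    rcases hx with hx | hx
    · exact memC p₁ hp₁ x hx
    · rw [SimpleGraph.Walk.support_reverse, List.mem_reverse] at hx
      exact memC p₂ hp₂ x hx
  have := touch_aux G Y C hdisj q hqC ⟨e₁, he₁Y, hu₁e⟩
  have hu₂B : u₂ ∈ bdry G Y := ⟨this, ⟨e₂, he₂c, hu₂e⟩⟩
  exact Set.eq_empty_iff_forall_notMem.mp hdisj u₂ ⟨hu₂C, hu₂B⟩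

end Paper
end

section
/- Let X, Y, Z be separations of a graph such that X and Y are not nested and X ∩ Y and Z are not nested. Then Z is not nested with X or Z is not nested with Y. -/
namespace Paper

variable {V : Type*} {ι : Type*}

theorem stmt2 (G : SimpleGraph V) (X Y Z : Set (Sym2 V))
    (hXY : ¬ Nested G X Y) (hZ : ¬ Nested G (X ∩ Y) Z) :
    ¬ Nested G X Z ∨ ¬ Nested G Y Z := by
  by_contra h
  push_neg at h
  obtain ⟨hXZ, hYZ⟩ := h
  apply hZ
  rcases hXZ with h1 | h1 | h1 | h1
  · exact Or.inl ((Set.inter_subset_left).trans h1)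
  · rcases hYZ with h2 | h2 | h2 | h2
    · exact Or.inl ((Set.inter_subset_right).trans h2)
    · -- ecompl X ⊆ Z, ecompl Y ⊆ Z
      refine Or.inr (Or.inl ?_)
      intro e he
      obtain ⟨heE, heXY⟩ := he
      by_cases hx : e ∈ X
      · by_cases hy : e ∈ Y
        · exact absurd ⟨hx, hy⟩ heXY
        · exact h2 ⟨heE, hy⟩
      · exact h1 ⟨heE, hx⟩
    · -- ecompl X ⊆ Z, Z ⊆ Y : get ecompl X ⊆ Y, Nested X Y
      exact absurd (Or.inr (Or.inl (h1.trans h2))) hXY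
    ·
      -- ecompl X ⊆ ecompl Y means E\X ⊆ E\Y, so E∩Y ⊆ X... gives Y ⊆ X? no.
      -- Z ⊆ ecompl Y ⊆ ecompl (X∩Y)
      refine Or.inr (Or.inr (Or.inr ?_))
      intro e he
      obtain ⟨heE, heY⟩ := h2 he
      exact ⟨heE, fun hxy => heY hxy.2⟩
  · -- Z ⊆ X
    rcases hYZ with h2 | h2 | h2 | h2
    · exact Or.inl ((Set.inter_subset_right).trans h2)
    · -- ecompl Y ⊆ Z ⊆ X : derive ecompl X ⊆ Y, Nested X Y
      refine absurd (Or.inr (Or.inl ?_)) hXY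
      intro e he
      obtain ⟨heE, heX⟩ := he
      by_contra hy
      exact heX (h1 (h2 ⟨heE, hy⟩))
    · exact Or.inr (Or.inr (Or.inl (Set.subset_inter h1 h2)))
    · refine Or.inr (Or.inr (Or.inr ?_))
      intro e he
      obtain ⟨heE, heY⟩ := h2 he
      exact ⟨heE, fun hxy => heY hxy.2⟩
  · -- Z ⊆ ecompl X ⊆ ecompl (X∩Y)
    refine Or.inr (Or.inr (Or.inr ?_))
    intro e he
    obtain ⟨heE, heX⟩ := h1 he
    exact ⟨heE, fun hxy => heX hxy.1⟩

end Paper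
end

section
/- Let X be a separation of a graph G with |∂(X)| = k finite, and let Y be a tight separation such that G − ∂(Y) has at least k+1 connected components. Then at least one of the two sets ∂(Y) \ V(X) and ∂(Y) \ V(X^∁) is empty. -/
namespace Paper

variable {V : Type*} {ι : Type*}

/-!
Suppose `a ∈ ∂Y` has no edge in `X` and `b ∈ ∂Y` has no edge outside `X`. By tightness both
have a neighbour in every component `C` of `G - ∂Y`, so a walk `a → C → b` through `C` starts
with an edge outside `X` and ends with an edge of `X`; it therefore passes through `∂X`, and it
can only do so inside `C`. The `k + 1` disjoint components thus meet `∂X` in `k + 1` distinct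
vertices, contradicting `|∂X| = k`.
-/

section Components

variable {G : SimpleGraph V} {S : Set V}

lemma ReachOutside.symm {u v : V} (h : ReachOutside G S u v) : ReachOutside G S v u := by
  obtain ⟨p, hp⟩ := h
  exact ⟨p.reverse, fun x hx => hp x (by simpa using hx)⟩

lemma ReachOutside.trans {u v w : V} (h₁ : ReachOutside G S u v) (h₂ : ReachOutside G S v w) :
    ReachOutside G S u w := by
  obtain ⟨p, hp⟩ := h₁
  obtain ⟨q, hq⟩ := h₂
  refine ⟨p.append q, fun x hx => ?_⟩
  rcases (SimpleGraph.Walk.mem_support_append_iff p q).1 hx with h | h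
  exacts [hp x h, hq x h]

lemma ReachOutside.of_mem_support {u v x : V} (p : G.Walk u v) (hp : ∀ y ∈ p.support, y ∉ S)
    (hx : x ∈ p.support) : ReachOutside G S x v := by
  classical
  exact ⟨p.dropUntil x hx, fun y hy => hp y (p.support_dropUntil_subset_support hx hy)⟩

lemma IsCompOutside.eq_of_mem {C C' : Set V} (hC : IsCompOutside G S C)
    (hC' : IsCompOutside G S C') {w : V} (hw : w ∈ C) (hw' : w ∈ C') : C = C' := by
  obtain ⟨v, -, rfl⟩ := hC
  obtain ⟨v', -, rfl⟩ := hC'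
  ext u
  exact ⟨fun hu => (hu.trans hw.symm).trans hw', fun hu => (hu.trans hw'.symm).trans hw⟩

lemma IsCompOutside.exists_walk {C : Set V} (hC : IsCompOutside G S C) {u w : V}
    (hu : u ∈ C) (hw : w ∈ C) : ∃ p : G.Walk u w, ∀ x ∈ p.support, x ∈ C := by
  obtain ⟨v, -, rfl⟩ := hC
  obtain ⟨p, hp⟩ := hu.trans hw.symm
  exact ⟨p, fun x hx => (ReachOutside.of_mem_support p hp hx).trans hw⟩

lemma IsCompOutside.card_le_ncard {Cs : ι → Set V} (hinj : Function.Injective Cs)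
    (hCs : ∀ i, IsCompOutside G S (Cs i)) {T : Set V} (hT : T.Finite)
    (hmeet : ∀ i, (Cs i ∩ T).Nonempty) : Nat.card ι ≤ T.ncard := by
  choose g hgC hgT using hmeet
  have hg : Function.Injective g := fun i j hij =>
    hinj ((hCs i).eq_of_mem (hCs j) (hgC i) (hij ▸ hgC j))
  have : Finite T := hT
  exact Nat.card_le_card_of_injective (fun i => ⟨g i, hgT i⟩) fun i j hij => hg congr($hij.1)

end Components

section Boundary

variable {G : SimpleGraph V} {X : Set (Sym2 V)}

lemma exists_adj_of_mem_bdry_sEdges {C : Set V} {v : V} (hv : v ∈ bdry G (sEdges G C)) :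
    ∃ c ∈ C, G.Adj v c := by
  obtain ⟨⟨e, ⟨he, c, hc, hce⟩, hve⟩, f, ⟨hf, hfC⟩, hvf⟩ := hv
  have hvC : v ∉ C := fun hvC => hfC ⟨hf, v, hvC, hvf⟩
  have hvc : v ≠ c := fun h => hvC (h ▸ hc)
  rw [(Sym2.mem_and_mem_iff hvc).1 ⟨hve, hce⟩] at he
  exact ⟨c, hc, he⟩

lemma exists_mem_support_bdry : ∀ {u v : V} (p : G.Walk u v),
    (∃ e ∈ p.edges, e ∈ X) → (∃ e ∈ p.edges, e ∉ X) → ∃ w ∈ p.support, w ∈ bdry G X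
  | _, _, .nil, ⟨_, he, _⟩, _ => by simp at he
  | _, _, .cons _ .nil, ⟨e, he, heX⟩, ⟨f, hf, hfX⟩ => by
    simp only [SimpleGraph.Walk.edges_cons, SimpleGraph.Walk.edges_nil,
      List.mem_singleton] at he hf
    exact absurd (he ▸ heX) (hf ▸ hfX)
  | u, _, .cons (v := v) huv (.cons (v := w) hvw q), hX, hXc => by
    by_cases hside : s(u, v) ∈ X ↔ s(v, w) ∈ X
    · have hX' : ∃ e ∈ (SimpleGraph.Walk.cons hvw q).edges, e ∈ X := by
        obtain ⟨e, he, heX⟩ := hX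
        rcases List.mem_cons.1 he with rfl | he
        exacts [⟨_, List.mem_cons_self, hside.1 heX⟩, ⟨e, he, heX⟩]
      have hXc' : ∃ e ∈ (SimpleGraph.Walk.cons hvw q).edges, e ∉ X := by
        obtain ⟨e, he, heX⟩ := hXc
        rcases List.mem_cons.1 he with rfl | he
        exacts [⟨_, List.mem_cons_self, mt hside.2 heX⟩, ⟨e, he, heX⟩]
      obtain ⟨x, hx, hxX⟩ := exists_mem_support_bdry _ hX' hXc'
      exact ⟨x, List.mem_cons_of_mem _ hx, hxX⟩
    · refine ⟨v, by simp, ?_⟩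
      by_cases huvX : s(u, v) ∈ X
      · exact ⟨⟨_, huvX, Sym2.mem_mk_right u v⟩,
          ⟨_, ⟨hvw, fun h => hside (iff_of_true huvX h)⟩, Sym2.mem_mk_left v w⟩⟩
      · have hvwX : s(v, w) ∈ X := by tauto
        exact ⟨⟨_, hvwX, Sym2.mem_mk_left v w⟩,
          ⟨_, ⟨huv, huvX⟩, Sym2.mem_mk_right u v⟩⟩

lemma exists_mem_support_bdry_of_adj {a b c d : V} (ha : a ∉ edgeVerts X)
    (hb : b ∉ edgeVerts (ecompl G X)) (hac : G.Adj a c) (hdb : G.Adj d b) (q : G.Walk c d) :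
    ∃ w ∈ q.support, w ∈ bdry G X := by
  let W : G.Walk a b := .cons hac (q.concat hdb)
  have hdbX : s(d, b) ∈ X := by
    by_contra h
    exact hb ⟨_, ⟨hdb, h⟩, Sym2.mem_mk_right d b⟩
  have hacX : s(a, c) ∉ X := fun h => ha ⟨_, h, Sym2.mem_mk_left a c⟩
  obtain ⟨w, hw, hwX⟩ := exists_mem_support_bdry W ⟨_, by simp [W], hdbX⟩ ⟨_, by simp [W], hacX⟩
  simp only [W, SimpleGraph.Walk.support_cons, SimpleGraph.Walk.support_concat, List.mem_cons,
    List.mem_append, List.not_mem_nil, or_false] at hw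
  rcases hw with rfl | hw | rfl
  · exact absurd hwX.1 ha
  · exact ⟨w, hw, hwX⟩
  · exact absurd hwX.2 hb

end Boundary

theorem stmt3_general (G : SimpleGraph V) (X Y : Set (Sym2 V)) (k : ℕ)
    (hfX : (bdry G X).Finite) (hkX : (bdry G X).ncard = k)
    (htight : ∀ C : Set V, IsCompOutside G (bdry G Y) C → bdry G (sEdges G C) = bdry G Y)
    (hcomps : ∃ Cs : Fin (k + 1) → Set V,
      Function.Injective Cs ∧ ∀ i, IsCompOutside G (bdry G Y) (Cs i)) :
    bdry G Y \ edgeVerts X = ∅ ∨ bdry G Y \ edgeVerts (ecompl G X) = ∅ := by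
  by_contra! h
  obtain ⟨⟨a, haY, haX⟩, ⟨b, hbY, hbX⟩⟩ := h
  obtain ⟨Cs, hinj, hCs⟩ := hcomps
  have hmeet : ∀ i, (Cs i ∩ bdry G X).Nonempty := by
    intro i
    rw [← htight _ (hCs i)] at haY hbY
    obtain ⟨c, hc, hac⟩ := exists_adj_of_mem_bdry_sEdges haY
    obtain ⟨d, hd, hbd⟩ := exists_adj_of_mem_bdry_sEdges hbY
    obtain ⟨q, hq⟩ := (hCs i).exists_walk hc hd
    obtain ⟨w, hw, hwX⟩ := exists_mem_support_bdry_of_adj haX hbX hac hbd.symm q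
    exact ⟨w, hq w hw, hwX⟩
  have := IsCompOutside.card_le_ncard hinj hCs hfX hmeet
  simp [hkX] at this

theorem stmt3 (G : SimpleGraph V) (X Y : Set (Sym2 V)) (k : ℕ)
    (hX : X ⊆ G.edgeSet) (hY : Y ⊆ G.edgeSet)
    (hfX : (bdry G X).Finite) (hkX : (bdry G X).ncard = k)
    (htight : ∀ C : Set V, IsCompOutside G (bdry G Y) C → bdry G (sEdges G C) = bdry G Y)
    (hcomps : ∃ Cs : Fin (k + 1) → Set V,
      Function.Injective Cs ∧ ∀ i, IsCompOutside G (bdry G Y) (Cs i)) :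
    bdry G Y \ edgeVerts X = ∅ ∨ bdry G Y \ edgeVerts (ecompl G X) = ∅ :=
  stmt3_general G X Y k hfX hkX htight hcomps

end Paper
end

section
/- Given two vertices v, w of a graph G and a natural number k, there are only finitely many distinct vertex sets S with |S| ≤ k that separate v from w minimally. -/
namespace Paper

variable {V : Type*} {ι : Type*}

/-!
Induction on `k`. If `v` and `w` are joined by a walk `P`, every separator `S` meets `P`, and for
`p ∈ S ∩ P` the set `S \ {p}` separates `v` and `w` minimally in `G` with the edges at `p` deleted.
So `S = insert p S'` for one of the finitely many `p ∈ P` and one of the finitely many `S'` of size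
at most `k - 1` in that graph. Deleting the edges at `p` instead of the vertex `p` keeps the vertex
type fixed, so the induction can generalize over `G`. If `v` and `w` are not connected, the only
minimal separator is `∅`, since each of its vertices would link `v` to `w`.
-/

open SimpleGraph

section MinimalSeparator

def SeparatesMinimally (G : SimpleGraph V) (v w : V) (S : Set V) : Prop :=
  v ∉ S ∧ w ∉ S ∧ ¬ ReachOutside G S v w ∧
    ∀ s ∈ S, (∃ u, G.Adj s u ∧ ReachOutside G S u v) ∧
             (∃ u, G.Adj s u ∧ ReachOutside G S u w)

variable {G : SimpleGraph V}

lemma ReachOutside.deleteIncidenceSet {S : Set V} {p a b : V} (h : ReachOutside G S a b)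
    (hp : p ∈ S) : ReachOutside (G.deleteIncidenceSet p) (S \ {p}) a b := by
  obtain ⟨q, hq⟩ := h
  refine ⟨q.transfer _ fun e he => ?_, fun x hx hxS => ?_⟩
  · rw [edgeSet_deleteIncidenceSet]
    refine ⟨q.edges_subset_edgeSet he, fun hpe => ?_⟩
    induction e with
    | h x y =>
      rcases Sym2.mem_iff.mp hpe.2 with rfl | rfl
      · exact hq _ (q.fst_mem_support_of_mem_edges he) hp
      · exact hq _ (q.snd_mem_support_of_mem_edges he) hp
  · rw [Walk.support_transfer] at hx
    exact hq x hx hxS.1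

lemma notMem_support_of_walk_deleteIncidenceSet {p a b : V}
    (q : (G.deleteIncidenceSet p).Walk a b) (ha : a ≠ p) : p ∉ q.support := by
  classical
  intro hp
  exact (deleteIncidenceSet_adj.mp ((q.takeUntil p hp).adj_penultimate
    (Walk.not_nil_of_ne ha))).2.2 rfl

lemma ReachOutside.of_deleteIncidenceSet {T : Set V} {p a b : V}
    (h : ReachOutside (G.deleteIncidenceSet p) T a b) (ha : a ≠ p) :
    ReachOutside G (insert p T) a b := by
  obtain ⟨q, hq⟩ := h
  refine ⟨q.mapLe (G.deleteIncidenceSet_le p), fun x hx hxS => ?_⟩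
  rw [Walk.support_mapLe_eq_support] at hx
  rcases hxS with rfl | hxT
  · exact notMem_support_of_walk_deleteIncidenceSet q ha hx
  · exact hq x hx hxT

lemma ReachOutside.start_notMem {S : Set V} {a b : V} (h : ReachOutside G S a b) : a ∉ S :=
  let ⟨q, hq⟩ := h
  hq a q.start_mem_support

namespace SeparatesMinimally

variable {S : Set V} {v w : V}

lemma exists_mem_support (h : SeparatesMinimally G v w S) (P : G.Walk v w) :
    ∃ p ∈ P.support, p ∈ S := by
  by_contra! hP
  exact h.2.2.1 ⟨P, hP⟩

lemma eq_empty_of_not_reachable (h : SeparatesMinimally G v w S) (hvw : ¬G.Reachable v w) :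
    S = ∅ := by
  refine Set.eq_empty_of_forall_notMem fun s hs => hvw ?_
  obtain ⟨⟨u₁, hsu₁, q₁, -⟩, ⟨u₂, hsu₂, q₂, -⟩⟩ := h.2.2.2 s hs
  exact ⟨q₁.reverse.append (.cons hsu₁.symm (.cons hsu₂ q₂))⟩

lemma deleteIncidenceSet (h : SeparatesMinimally G v w S) {p : V} (hp : p ∈ S) :
    SeparatesMinimally (G.deleteIncidenceSet p) v w (S \ {p}) := by
  obtain ⟨hv, hw, hsep, hmin⟩ := h
  have neighbour : ∀ s ∈ S \ {p}, ∀ x, (∃ u, G.Adj s u ∧ ReachOutside G S u x) →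
      ∃ u, (G.deleteIncidenceSet p).Adj s u ∧
        ReachOutside (G.deleteIncidenceSet p) (S \ {p}) u x := by
    rintro s ⟨-, hsp⟩ x ⟨u, hsu, hux⟩
    refine ⟨u, deleteIncidenceSet_adj.mpr ⟨hsu, hsp, ?_⟩, hux.deleteIncidenceSet hp⟩
    exact ne_of_mem_of_not_mem hp hux.start_notMem |>.symm
  refine ⟨fun hv' => hv hv'.1, fun hw' => hw hw'.1, fun hvw => hsep ?_,
    fun s hs => ⟨neighbour s hs v (hmin s hs.1).1, neighbour s hs w (hmin s hs.1).2⟩⟩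
  simpa [Set.insert_eq_of_mem hp] using
    hvw.of_deleteIncidenceSet (ne_of_mem_of_not_mem hp hv).symm

end SeparatesMinimally

theorem finite_setOf_separatesMinimally (G : SimpleGraph V) (v w : V) (k : ℕ) :
    {S : Set V | S.Finite ∧ S.ncard ≤ k ∧ SeparatesMinimally G v w S}.Finite := by
  induction k generalizing G with
  | zero =>
    refine (Set.finite_singleton ∅).subset fun S ⟨hfin, hcard, _⟩ => ?_
    exact (Set.ncard_eq_zero hfin).mp (Nat.le_zero.mp hcard)
  | succ k ih =>
    by_cases hvw : G.Reachable v w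
    · obtain ⟨P⟩ := hvw
      refine (P.support.finite_toSet.biUnion fun p _ =>
        (ih (G.deleteIncidenceSet p)).image (insert p)).subset ?_
      rintro S ⟨hfin, hcard, hS⟩
      obtain ⟨p, hpP, hpS⟩ := hS.exists_mem_support P
      have hcard' := Set.ncard_sdiff_singleton_add_one hpS hfin
      refine Set.mem_biUnion hpP ⟨S \ {p}, ⟨hfin.sdiff, by omega, hS.deleteIncidenceSet hpS⟩, ?_⟩
      simp [Set.insert_eq_of_mem hpS]
    · exact (Set.finite_singleton ∅).subset fun S ⟨_, _, hS⟩ =>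
        hS.eq_empty_of_not_reachable hvw

end MinimalSeparator

theorem stmt4 (G : SimpleGraph V) (v w : V) (k : ℕ) :
    {S : Set V | S.Finite ∧ S.ncard ≤ k ∧ v ∉ S ∧ w ∉ S ∧
      ¬ ReachOutside G S v w ∧
      ∀ s ∈ S, (∃ u, G.Adj s u ∧ ReachOutside G S u v) ∧
               (∃ u, G.Adj s u ∧ ReachOutside G S u w)}.Finite :=
  finite_setOf_separatesMinimally G v w k

end Paper
end

section
/- Let T₂ be the infinite rooted binary tree and let G be obtained from T₂ by adding, for each end ω of T₂, a new vertex v_ω joined to every vertex of the unique ray of T₂ from the root belonging to ω. Then every end of G is dominated (by the corresponding vertex v_ω), i.e., G has no undominated end. -/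
namespace Paper

variable {V : Type*} {ι : Type*}

/-- Vertices: finite 0-1 sequences (nodes of the binary tree `T₂`) plus one
new vertex `v_ω` for every end `ω` of `T₂` (an infinite 0-1 sequence). -/
abbrev V9 : Type := List Bool ⊕ (ℕ → Bool)

/-- The prefix of length `n` of an infinite 0-1 sequence. -/
def prefixOf (s : ℕ → Bool) (n : ℕ) : List Bool := List.ofFn (fun i : Fin n => s i)

def adj9 : V9 → V9 → Prop
  | Sum.inl a, Sum.inl b => (∃ x, b = a ++ [x]) ∨ (∃ x, a = b ++ [x])
  | Sum.inl a, Sum.inr s => ∃ n, a = prefixOf s n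
  | Sum.inr s, Sum.inl a => ∃ n, a = prefixOf s n
  | Sum.inr _, Sum.inr _ => False

/-- The graph obtained from `T₂` by adding, for each end `ω`, a vertex `v_ω`
joined to every vertex of the ray from the root belonging to `ω`. -/
def G9 : SimpleGraph V9 where
  Adj := adj9
  symm := by
    constructor
    rintro (a | s) (b | t) h
    · exact h.symm
    · exact h
    · exact h
    · exact h.elim
  loopless := by
    constructor
    rintro (a | s) h
    · rcases h with ⟨x, hx⟩ | ⟨x, hx⟩ <;>
        · have := congrArg List.length hx
          simp at this
    · exact h

/-!
Call a node `a` of `T₂` eventually visited by a ray if the ray eventually stays in the subtree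
below `a` (with the vertices `v_ω` of the ends through `a`). The ray can cross the boundary of
that subtree only at the finitely many ancestors of `a`, so, being injective, it eventually stays
in every such subtree it meets infinitely often. Hence the root is eventually visited and every
eventually visited node has an eventually visited child, which gives an end `ω`. Every vertex
other than `v_ω` lies outside some subtree along `ω`, which the ray must afterwards enter through
an ancestor of its root, i.e. a neighbour of `v_ω`. So `v_ω` has infinitely many neighbours on the
ray, and the single edges to them are the required paths.
-/

open Filter

lemma dominates_of_frequently_adj {G : SimpleGraph V} {v : V} {f : ℕ → V}
    (hf : Function.Injective f) (h : ∃ᶠ n in atTop, G.Adj v (f n)) : Dominates G v f := by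
  obtain ⟨g, hg, hadj⟩ : ∃ g : ℕ → ℕ, StrictMono g ∧ ∀ k, G.Adj v (f (g k)) :=
    extraction_of_frequently_atTop h
  refine ⟨g, fun k => (hadj k).toWalk, hg, fun k => (hadj k).isPath_toWalk, ?_⟩
  intro k l hkl x hxk hxl
  simp only [SimpleGraph.Adj.support_toWalk, List.mem_cons, List.not_mem_nil, or_false] at hxk hxl
  rcases hxk with rfl | rfl
  · rfl
  · rcases hxl with h | h
    · exact h
    · exact absurd (hg.injective (hf h)) hkl

lemma _root_.Function.Injective.eventually_notMem {α : Type*} {f : ℕ → α}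
    (hf : Function.Injective f) {S : Set α} (hS : S.Finite) : ∀ᶠ n in atTop, f n ∉ S := by
  rw [← Nat.cofinite_eq_atTop]
  exact hf.tendsto_cofinite.eventually hS.eventually_cofinite_notMem

lemma eventually_of_frequently_of_eventually_imp_succ {P : ℕ → Prop}
    (hP : ∃ᶠ n in atTop, P n) (hstep : ∀ᶠ n in atTop, P n → P (n + 1)) :
    ∀ᶠ n in atTop, P n := by
  obtain ⟨N, hN⟩ := eventually_atTop.1 hstep
  obtain ⟨n₀, hn₀N, hn₀⟩ := frequently_atTop.1 hP N
  refine eventually_atTop.2 ⟨n₀, fun n hn => ?_⟩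
  induction n, hn using Nat.le_induction with
  | base => exact hn₀
  | succ n hn ih => exact hN n (hn₀N.trans hn) ih

lemma exists_ge_not_and_succ {P : ℕ → Prop} {m : ℕ} (hm : ¬ P m) (hP : ∀ᶠ n in atTop, P n) :
    ∃ n ≥ m, ¬ P n ∧ P (n + 1) := by
  by_contra! h
  obtain ⟨N, hN⟩ := eventually_atTop.1 hP
  have hnot : ∀ n ≥ m, ¬ P n := fun n hn => by
    induction n, hn using Nat.le_induction with
    | base => exact hm
    | succ n hn ih => exact h n hn ih
  exact hnot (max m N) (le_max_left m N) (hN _ (le_max_right m N))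

lemma length_prefixOf (s : ℕ → Bool) (n : ℕ) : (prefixOf s n).length = n := by
  simp [prefixOf]

lemma prefixOf_succ (s : ℕ → Bool) (n : ℕ) : prefixOf s (n + 1) = prefixOf s n ++ [s n] := by
  rw [prefixOf, List.ofFn_succ', List.concat_eq_append]
  simp [prefixOf]

lemma prefixOf_prefix_prefixOf (s : ℕ → Bool) {m n : ℕ} (h : m ≤ n) :
    prefixOf s m <+: prefixOf s n := by
  induction n, h using Nat.le_induction with
  | base => exact List.prefix_rfl
  | succ n _ ih => exact ih.trans ⟨[s n], (prefixOf_succ s n).symm⟩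

lemma eq_prefixOf_of_prefix {s : ℕ → Bool} {b : List Bool} {n : ℕ} (h : b <+: prefixOf s n) :
    b = prefixOf s b.length := by
  have hl : b.length ≤ n := by simpa [length_prefixOf] using h.length_le
  exact (List.prefix_of_prefix_length_le h (prefixOf_prefix_prefixOf s hl)
    (by simp [length_prefixOf])).eq_of_length (by simp [length_prefixOf])

lemma apply_eq_of_prefixOf_succ_eq {s t : ℕ → Bool} {i : ℕ}
    (h : prefixOf t (i + 1) = prefixOf s (i + 1)) : t i = s i := by
  simpa using congrFun (List.ofFn_inj.1 h) (Fin.last i)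

/-- The subtree of `T₂` rooted at `a`, together with the vertices `v_ω` of the ends through `a`. -/
def subtree (a : List Bool) : Set V9
  | Sum.inl b => a <+: b
  | Sum.inr t => prefixOf t a.length = a

@[simp] lemma inl_mem_subtree {a b : List Bool} : Sum.inl b ∈ subtree a ↔ a <+: b := Iff.rfl

@[simp] lemma inr_mem_subtree {a : List Bool} {t : ℕ → Bool} :
    Sum.inr t ∈ subtree a ↔ prefixOf t a.length = a := Iff.rfl

lemma mem_subtree_nil (v : V9) : v ∈ subtree [] := by
  cases v <;> simp [prefixOf]

lemma inr_mem_subtree_prefixOf {s t : ℕ → Bool} {n : ℕ} :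
    Sum.inr t ∈ subtree (prefixOf s n) ↔ prefixOf t n = prefixOf s n := by
  simp [length_prefixOf]

lemma G9_adj_inr_inl_of_prefix {s : ℕ → Bool} {b : List Bool} {n : ℕ}
    (h : b <+: prefixOf s n) : G9.Adj (Sum.inr s) (Sum.inl b) :=
  ⟨b.length, eq_prefixOf_of_prefix h⟩

lemma exists_eq_inl_prefix_of_adj {a : List Bool} {u v : V9} (h : G9.Adj u v)
    (hu : u ∈ subtree a) (hv : v ∉ subtree a) : ∃ b, v = Sum.inl b ∧ b <+: a := by
  rcases u with b | t <;> rcases v with c | t'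
  · rcases h with ⟨x, rfl⟩ | ⟨x, rfl⟩
    · exact absurd (hu.trans (List.prefix_append b [x])) hv
    · refine ⟨c, rfl, ?_⟩
      exact (List.prefix_or_prefix_of_prefix hu (List.prefix_append c [x])).resolve_left hv
  · obtain ⟨n, rfl⟩ := h
    exact absurd (eq_prefixOf_of_prefix hu).symm hv
  · obtain ⟨n, rfl⟩ := h
    rcases le_total a.length n with hle | hle
    · exact absurd (hu ▸ prefixOf_prefix_prefixOf t hle) hv
    · exact ⟨_, rfl, hu ▸ prefixOf_prefix_prefixOf t hle⟩
  · exact h.elim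

lemma exists_mem_subtree_append {a : List Bool} {v : V9} (hv : v ∈ subtree a)
    (hne : v ≠ Sum.inl a) : ∃ x, v ∈ subtree (a ++ [x]) := by
  rcases v with b | t
  · obtain ⟨_ | ⟨x, r⟩, rfl⟩ := hv
    · simp at hne
    · exact ⟨x, r, by simp⟩
  · refine ⟨t a.length, ?_⟩
    rw [inr_mem_subtree] at hv ⊢
    rw [List.length_append, List.length_singleton, prefixOf_succ, hv]

lemma exists_notMem_subtree_prefixOf {s : ℕ → Bool} {v : V9} (hv : v ≠ Sum.inr s) :
    ∃ n, v ∉ subtree (prefixOf s n) := by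
  rcases v with b | t
  · refine ⟨b.length + 1, fun h => ?_⟩
    have := h.length_le
    simp [length_prefixOf] at this
  · obtain ⟨i, hi⟩ := Function.ne_iff.1 fun h => hv (congrArg Sum.inr h)
    exact ⟨i + 1, fun h => hi (apply_eq_of_prefixOf_succ_eq (inr_mem_subtree_prefixOf.1 h))⟩

lemma exists_forall_prefixOf_mem {T : Set (List Bool)} (hnil : [] ∈ T)
    (hstep : ∀ a ∈ T, ∃ x, a ++ [x] ∈ T) : ∃ s : ℕ → Bool, ∀ n, prefixOf s n ∈ T := by
  choose c hc using hstep
  let b : ℕ → T := fun n => Nat.rec ⟨[], hnil⟩ (fun _ a => ⟨a.1 ++ [c a.1 a.2], hc _ a.2⟩) n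
  refine ⟨fun n => c (b n).1 (b n).2, fun n => ?_⟩
  suffices prefixOf (fun n => c (b n).1 (b n).2) n = (b n).1 from this ▸ (b n).2
  induction n with
  | zero => rfl
  | succ n ih => rw [prefixOf_succ, ih]

section Ray

variable {f : ℕ → V9}

lemma IsRay.eventually_mem_subtree (hf : IsRay G9 f) {a : List Bool}
    (h : ∃ᶠ n in atTop, f n ∈ subtree a) : ∀ᶠ n in atTop, f n ∈ subtree a := by
  refine eventually_of_frequently_of_eventually_imp_succ h ?_
  have hancestors : (Sum.inl '' {b | b ∈ a.inits} : Set V9).Finite := a.inits.finite_toSet.image _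
  filter_upwards [(tendsto_add_atTop_nat 1).eventually (hf.1.eventually_notMem hancestors)]
    with m hm hin
  by_contra hout
  obtain ⟨b, hb, hba⟩ := exists_eq_inl_prefix_of_adj (hf.2 m) hin hout
  exact hm ⟨b, (List.mem_inits _ _).2 hba, hb.symm⟩

lemma IsRay.exists_eventually_mem_subtree_prefixOf (hf : IsRay G9 f) :
    ∃ s : ℕ → Bool, ∀ n, ∀ᶠ k in atTop, f k ∈ subtree (prefixOf s n) := by
  refine exists_forall_prefixOf_mem (T := {a | ∀ᶠ k in atTop, f k ∈ subtree a})
    (Eventually.of_forall fun k => mem_subtree_nil _) fun a ha => ?_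
  by_contra! hnone
  have hout : ∀ x, ∀ᶠ k in atTop, f k ∉ subtree (a ++ [x]) := fun x =>
    not_frequently.1 fun hfreq => hnone x (hf.eventually_mem_subtree hfreq)
  have hne := hf.1.eventually_notMem (Set.finite_singleton (Sum.inl a))
  obtain ⟨k, hk, hkne, hkout⟩ := (ha.and (hne.and (eventually_all.2 hout))).exists
  obtain ⟨x, hx⟩ := exists_mem_subtree_append hk hkne
  exact hkout x hx

lemma IsRay.frequently_adj_inr (hf : IsRay G9 f) {s : ℕ → Bool}
    (hs : ∀ n, ∀ᶠ k in atTop, f k ∈ subtree (prefixOf s n)) :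
    ∃ᶠ k in atTop, G9.Adj (Sum.inr s) (f k) := by
  refine frequently_atTop.2 fun M => ?_
  have hne := hf.1.eventually_notMem (Set.finite_singleton (Sum.inr s))
  obtain ⟨m, hmM, hm⟩ := ((eventually_ge_atTop M).and hne).exists
  obtain ⟨n, hn⟩ := exists_notMem_subtree_prefixOf hm
  obtain ⟨k, hkm, hk, hk1⟩ := exists_ge_not_and_succ hn (hs n)
  obtain ⟨b, hb, hba⟩ := exists_eq_inl_prefix_of_adj (hf.2 k).symm hk1 hk
  exact ⟨k, hmM.trans hkm, hb ▸ G9_adj_inr_inl_of_prefix hba⟩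

end Ray

theorem stmt9 (f : ℕ → V9) (hf : IsRay G9 f) :
    ∃ v : V9, Dominates G9 v f := by
  obtain ⟨s, hs⟩ := hf.exists_eventually_mem_subtree_prefixOf
  exact ⟨Sum.inr s, dominates_of_frequently_adj hf.1 (hf.frequently_adj_inr hs)⟩

end Paper
end

section
/- Every normal spanning tree T of a connected graph G is end-faithful: for every end ω of G, T contains exactly one ray starting at the root of T that belongs to ω. -/
/-! Normality means that every `G`-walk between `u` and `v` passes through a common lower bound
of `u` and `v` in the tree order. Applied to segments of a ray `f`, which eventually avoids any
vertex, this shows: if `f` lies eventually above `t`, then it lies eventually above one child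
of `t`. Following these children from the root gives a ray `g` of `T`. It is equivalent to `f`
because only finitely many `g n` lie below a vertex of a finite set `S`, while the up-set of any
vertex is connected in `T`. Conversely, if a `T`-ray `h` from the root is equivalent to `f`, then
each `h n` lies below `f k` for all large `k`, since a walk from `f k` to a later `h m` avoiding
the finite set below `h n` has a common lower bound of its ends. So `h n` and `g n` are comparable
for every `n`, and two rays from the root that are comparable at every step agree child by
child. -/

namespace Paper

variable {V : Type*} {ι : Type*}

/-- Tree order of a rooted spanning tree: `u ≤ v` iff `u` lies on the (unique)
path in `T` from the root `r` to `v`. -/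
def TreeLE (T : SimpleGraph V) (r u v : V) : Prop :=
  ∀ p : T.Walk r v, p.IsPath → u ∈ p.support


open SimpleGraph Walk Filter

section TreeOrder

variable {T : SimpleGraph V} {r t u v w x c c' : V}

lemma treeLE_refl : TreeLE T r v v := fun p _ => p.end_mem_support

lemma treeLE_root : TreeLE T r r v := fun p _ => p.start_mem_support

lemma treeLE_trans (hxu : TreeLE T r x u) (huv : TreeLE T r u v) : TreeLE T r x v := by
  classical
  intro p hp
  have hu := huv p hp
  exact p.support_takeUntil_subset_support hu (hxu _ (hp.takeUntil hu))

lemma treeLE_of_mem_support (htree : T.IsTree) {p : T.Walk r v} (hp : p.IsPath)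
    (hu : u ∈ p.support) : TreeLE T r u v := by
  intro q hq
  rwa [(htree.existsUnique_path r v).unique hq hp]

lemma treeLE_getVert (htree : T.IsTree) {p : T.Walk r v} (hp : p.IsPath) {i j : ℕ}
    (hij : i ≤ j) : TreeLE T r (p.getVert i) (p.getVert j) := by
  refine treeLE_of_mem_support htree (hp.take j) ?_
  rw [← min_eq_right hij, ← take_getVert]
  exact getVert_mem_support _ _

lemma finite_setOf_treeLE (htree : T.IsTree) : {u | TreeLE T r u v}.Finite := by
  obtain ⟨p, hp, -⟩ := htree.existsUnique_path r v
  exact p.support.finite_toSet.subset fun u hu => hu p hp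

lemma treeLE_antisymm (htree : T.IsTree) (hxv : TreeLE T r x v) (hvx : TreeLE T r v x) :
    x = v := by
  classical
  obtain ⟨p, hp, -⟩ := htree.existsUnique_path r v
  have hx : x ∈ p.support := hxv p hp
  by_contra hne
  exact endpoint_notMem_support_takeUntil hp hx (Ne.symm hne) (hvx _ (hp.takeUntil hx))

lemma treeLE_total_of_treeLE (htree : T.IsTree) (hxw : TreeLE T r x w) (huw : TreeLE T r u w) :
    TreeLE T r x u ∨ TreeLE T r u x := by
  obtain ⟨p, hp, -⟩ := htree.existsUnique_path r w
  obtain ⟨i, rfl, -⟩ := mem_support_iff_exists_getVert.mp (hxw p hp)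
  obtain ⟨j, rfl, -⟩ := mem_support_iff_exists_getVert.mp (huw p hp)
  exact (le_total i j).imp (treeLE_getVert htree hp) (treeLE_getVert htree hp)

lemma exists_walk_treeLE_of_treeLE (htree : T.IsTree) (htu : TreeLE T r t u) :
    ∃ q : T.Walk t u, ∀ x ∈ q.support, TreeLE T r t x := by
  obtain ⟨p, hp, -⟩ := htree.existsUnique_path r u
  obtain ⟨i, rfl, -⟩ := mem_support_iff_exists_getVert.mp (htu p hp)
  refine ⟨p.drop i, fun x hx => ?_⟩
  obtain ⟨m, rfl, -⟩ := mem_support_iff_exists_getVert.mp hx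
  rw [drop_getVert]
  exact treeLE_getVert htree hp (Nat.le_add_right i m)

lemma exists_child_of_treeLE (htree : T.IsTree) (htv : TreeLE T r t v) (hne : t ≠ v) :
    ∃ c, T.Adj t c ∧ TreeLE T r t c ∧ TreeLE T r c v := by
  obtain ⟨p, hp, -⟩ := htree.existsUnique_path r v
  obtain ⟨i, rfl, hi⟩ := mem_support_iff_exists_getVert.mp (htv p hp)
  have hlt : i < p.length := hi.lt_of_ne fun h => hne (h ▸ p.getVert_length)
  refine ⟨p.getVert (i + 1), p.adj_getVert_succ hlt, treeLE_getVert htree hp i.le_succ, ?_⟩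
  simpa only [getVert_length] using treeLE_getVert htree hp hlt

lemma eq_or_treeLE_of_treeLE_child (htree : T.IsTree) (hadj : T.Adj t c)
    (htc : TreeLE T r t c) (hxc : TreeLE T r x c) : x = c ∨ TreeLE T r x t := by
  obtain ⟨p, hp, -⟩ := htree.existsUnique_path r t
  have hc : c ∉ p.support := fun hc =>
    hadj.ne (treeLE_antisymm htree htc (treeLE_of_mem_support htree hp hc))
  have hx := hxc _ (hp.concat hc hadj)
  rw [support_concat, List.mem_append, List.mem_singleton] at hx
  exact hx.symm.imp_right (treeLE_of_mem_support htree hp)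

lemma child_eq_of_total (htree : T.IsTree) (hadj : T.Adj t c) (hadj' : T.Adj t c')
    (htc : TreeLE T r t c) (htc' : TreeLE T r t c')
    (hcomp : TreeLE T r c c' ∨ TreeLE T r c' c) : c = c' := by
  wlog hcc : TreeLE T r c c' generalizing c c'
  · exact (this hadj' hadj htc' htc hcomp.symm (hcomp.resolve_left hcc)).symm
  refine (eq_or_treeLE_of_treeLE_child htree hadj' htc' hcc).resolve_right fun hct => ?_
  exact hadj.ne (treeLE_antisymm htree htc hct)

end TreeOrder

section Rays

variable {G T : SimpleGraph V} {f g h : ℕ → V}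

def rayWalk (hadj : ∀ n, G.Adj (f n) (f (n + 1))) : (n : ℕ) → G.Walk (f 0) (f n)
  | 0 => .nil
  | n + 1 => (rayWalk hadj n).concat (hadj n)

lemma support_rayWalk (hadj : ∀ n, G.Adj (f n) (f (n + 1))) (n : ℕ) :
    (rayWalk hadj n).support = (List.range (n + 1)).map f := by
  induction n with
  | zero => rfl
  | succ n ih =>
    rw [rayWalk, support_concat, ih, List.range_succ (n := n + 1), List.map_append]
    rfl

lemma IsRay.isPath_rayWalk (hf : IsRay G f) (n : ℕ) : (rayWalk hf.2 n).IsPath := by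
  rw [isPath_def, support_rayWalk]
  exact List.nodup_range.map hf.1

lemma IsRay.treeLE_of_le (htree : T.IsTree) (hg : IsRay T g) {m n : ℕ} (hmn : m ≤ n) :
    TreeLE T (g 0) (g m) (g n) :=
  treeLE_of_mem_support htree (hg.isPath_rayWalk n)
    (by rw [support_rayWalk]; exact List.mem_map_of_mem (List.mem_range.mpr (by omega)))

lemma isRay_of_treeLE_succ (htree : T.IsTree) {r : V} (hadj : ∀ n, T.Adj (g n) (g (n + 1)))
    (hle : ∀ n, TreeLE T r (g n) (g (n + 1))) : IsRay T g := by
  have hmono : ∀ m n, m ≤ n → TreeLE T r (g m) (g n) := fun m n hmn => by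
    induction n, hmn using Nat.le_induction with
    | base => exact treeLE_refl
    | succ n _ ih => exact treeLE_trans ih (hle n)
  have hne : ∀ m n, m < n → g m ≠ g n := fun m n hmn heq =>
    (hadj m).ne (treeLE_antisymm htree (hle m) (heq ▸ hmono (m + 1) n hmn))
  refine ⟨fun m n heq => ?_, hadj⟩
  rcases lt_trichotomy m n with h | h | h
  · exact absurd heq (hne m n h)
  · exact h
  · exact absurd heq.symm (hne n m h)

lemma IsRay.eq_of_treeLE_total (htree : T.IsTree) (hg : IsRay T g) (hh : IsRay T h)
    (h0 : g 0 = h 0) (hcomp : ∀ n, TreeLE T (g 0) (g n) (h n) ∨ TreeLE T (g 0) (h n) (g n)) :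
    g = h := by
  funext n
  induction n with
  | zero => exact h0
  | succ n ih =>
    have hh' := hh.treeLE_of_le htree n.le_succ
    rw [← h0, ← ih] at hh'
    exact child_eq_of_total htree (hg.2 n) (ih ▸ hh.2 n) (hg.treeLE_of_le htree n.le_succ) hh'
      (hcomp (n + 1))

end Rays

section NormalTree

variable {G T : SimpleGraph V} {r : V} {f g : ℕ → V}

lemma exists_mem_support_treeLE_treeLE (htree : T.IsTree)
    (hnormal : ∀ u v : V, G.Adj u v → TreeLE T r u v ∨ TreeLE T r v u) {u v : V}
    (p : G.Walk u v) : ∃ z ∈ p.support, TreeLE T r z u ∧ TreeLE T r z v := by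
  induction p with
  | nil => exact ⟨_, start_mem_support _, treeLE_refl, treeLE_refl⟩
  | @cons a b _ hab q ih =>
    obtain ⟨z, hz, hzb, hzv⟩ := ih
    have hz' : z ∈ (cons hab q).support := List.mem_cons_of_mem _ hz
    rcases hnormal a b hab with hab | hba
    · rcases treeLE_total_of_treeLE htree hzb hab with hza | haz
      · exact ⟨z, hz', hza, hzv⟩
      · exact ⟨a, start_mem_support _, treeLE_refl, treeLE_trans haz hzv⟩
    · exact ⟨z, hz', treeLE_trans hzb hba, hzv⟩

lemma reachOutside_of_treeLE (hle : T ≤ G) (htree : T.IsTree) {S : Set V} {t u v : V}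
    (hS : ∀ x, TreeLE T r t x → x ∉ S) (htu : TreeLE T r t u) (htv : TreeLE T r t v) :
    ReachOutside G S u v := by
  obtain ⟨p, hp⟩ := exists_walk_treeLE_of_treeLE htree htu
  obtain ⟨q, hq⟩ := exists_walk_treeLE_of_treeLE htree htv
  refine ⟨(p.reverse.append q).mapLe hle, fun x hx => hS x ?_⟩
  rw [support_mapLe_eq_support, mem_support_append_iff, support_reverse, List.mem_reverse] at hx
  exact hx.elim (hp x) (hq x)

lemma exists_child_eventually_treeLE (htree : T.IsTree)
    (hnormal : ∀ u v : V, G.Adj u v → TreeLE T r u v ∨ TreeLE T r v u) (hf : IsRay G f)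
    {t : V} (ht : ∀ᶠ n in atTop, TreeLE T r t (f n)) :
    ∃ c, T.Adj t c ∧ TreeLE T r t c ∧ ∀ᶠ n in atTop, TreeLE T r c (f n) := by
  have hne : ∀ᶠ n in atTop, f n ≠ t :=
    Nat.cofinite_eq_atTop ▸ hf.1.tendsto_cofinite.eventually (eventually_cofinite_ne t)
  obtain ⟨N, hN⟩ := eventually_atTop.mp (ht.and hne)
  obtain ⟨c, hadj, htc, hcN⟩ :=
    exists_child_of_treeLE htree (hN N le_rfl).1 (hN N le_rfl).2.symm
  refine ⟨c, hadj, htc, eventually_atTop.mpr ⟨N, fun n hn => ?_⟩⟩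
  obtain ⟨k, rfl⟩ := Nat.exists_eq_add_of_le hn
  -- a common lower bound of `f N` and `f (N + k)` on the ray between them lies strictly
  -- above `t`, hence above the child of `t` below `f N`
  obtain ⟨z, hz, hzN, hzk⟩ := exists_mem_support_treeLE_treeLE htree hnormal
    (rayWalk (f := fun k => f (N + k)) (fun k => hf.2 (N + k)) k)
  rw [support_rayWalk, List.mem_map] at hz
  obtain ⟨m, -, rfl⟩ := hz
  obtain ⟨c', hadj', htc', hc'z⟩ :=
    exists_child_of_treeLE htree (hN (N + m) (by omega)).1 (hN (N + m) (by omega)).2.symm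
  have hc' : c' = c := child_eq_of_total htree hadj' hadj htc' htc
    (treeLE_total_of_treeLE htree (treeLE_trans hc'z hzN) hcN)
  exact hc' ▸ treeLE_trans hc'z hzk

lemma exists_isRay_eventually_treeLE (htree : T.IsTree)
    (hnormal : ∀ u v : V, G.Adj u v → TreeLE T r u v ∨ TreeLE T r v u) (hf : IsRay G f) :
    ∃ g : ℕ → V, IsRay T g ∧ g 0 = r ∧
      ∀ n, ∀ᶠ k in atTop, TreeLE T r (g n) (f k) := by
  choose! child hadj hle hev using
    fun t (ht : ∀ᶠ k in atTop, TreeLE T r t (f k)) =>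
      exists_child_eventually_treeLE htree hnormal hf ht
  have hg : ∀ n, ∀ᶠ k in atTop, TreeLE T r (child^[n] r) (f k) := fun n => by
    induction n with
    | zero => exact .of_forall fun _ => treeLE_root
    | succ n ih => rw [Function.iterate_succ_apply']; exact hev _ ih
  refine ⟨fun n => child^[n] r,
    isRay_of_treeLE_succ htree (r := r) (fun n => ?_) (fun n => ?_), rfl, hg⟩
  · rw [Function.iterate_succ_apply']; exact hadj _ (hg n)
  · rw [Function.iterate_succ_apply']; exact hle _ (hg n)

lemma rayEquiv_of_eventually_treeLE (hle : T ≤ G) (htree : T.IsTree) (hg : IsRay T g)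
    (hgf : ∀ n, ∀ᶠ k in atTop, TreeLE T (g 0) (g n) (f k)) : RayEquiv G f g := by
  intro S hS
  have hfin : {n | ∃ s ∈ S, TreeLE T (g 0) (g n) s}.Finite := by
    refine (hS.biUnion fun s _ =>
      (finite_setOf_treeLE htree (r := g 0) (v := s)).preimage hg.1.injOn).subset ?_
    rintro n ⟨s, hs, hns⟩
    exact Set.mem_biUnion hs hns
  obtain ⟨N, hN⟩ := hfin.exists_notMem
  obtain ⟨M, hM⟩ := eventually_atTop.mp (hgf N)
  refine ⟨max N M, fun i hi j hj => ?_⟩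
  exact reachOutside_of_treeLE hle htree (t := g N) (fun x hx hxS => hN ⟨x, hxS, hx⟩)
    (hM i (by omega)) (hg.treeLE_of_le htree (by omega))

lemma eventually_treeLE_of_rayEquiv (htree : T.IsTree)
    (hnormal : ∀ u v : V, G.Adj u v → TreeLE T r u v ∨ TreeLE T r v u)
    (hg : IsRay T g) (hg0 : g 0 = r) (hfg : RayEquiv G f g) (n : ℕ) :
    ∀ᶠ k in atTop, TreeLE T r (g n) (f k) := by
  subst hg0
  obtain ⟨N, hN⟩ := hfg _ (finite_setOf_treeLE htree (v := g n))
  refine eventually_atTop.mpr ⟨N, fun k hk => ?_⟩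
  obtain ⟨p, hp⟩ := hN k hk (max N n) (le_max_left N n)
  obtain ⟨z, hz, hzk, hzg⟩ := exists_mem_support_treeLE_treeLE htree hnormal p
  have hgz := treeLE_total_of_treeLE htree hzg (hg.treeLE_of_le htree (le_max_right N n))
  exact treeLE_trans (hgz.resolve_left (hp z hz)) hzk

end NormalTree

theorem stmt10_general (G T : SimpleGraph V) (r : V)
    (hle : T ≤ G) (htree : T.IsTree)
    (hnormal : ∀ u v : V, G.Adj u v → TreeLE T r u v ∨ TreeLE T r v u)
    (f : ℕ → V) (hf : IsRay G f) :
    ∃! g : ℕ → V, IsRay T g ∧ g 0 = r ∧ RayEquiv G f g := by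
  obtain ⟨g, hg, hg0, hgf⟩ := exists_isRay_eventually_treeLE htree hnormal hf
  subst hg0
  refine ⟨g, ⟨hg, rfl, rayEquiv_of_eventually_treeLE hle htree hg hgf⟩, ?_⟩
  rintro h ⟨hh, hh0, hfh⟩
  have hhf := eventually_treeLE_of_rayEquiv htree hnormal hh hh0 hfh
  refine (hg.eq_of_treeLE_total htree hh hh0.symm fun n => ?_).symm
  obtain ⟨k, hgk, hhk⟩ := ((hgf n).and (hhf n)).exists
  exact treeLE_total_of_treeLE htree hgk hhk

theorem stmt10 (G T : SimpleGraph V) (r : V)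
    (hconn : G.Connected)
    (hle : T ≤ G) (htree : T.IsTree)
    (hnormal : ∀ u v : V, G.Adj u v → TreeLE T r u v ∨ TreeLE T r v u)
    (f : ℕ → V) (hf : IsRay G f) :
    ∃! g : ℕ → V, IsRay T g ∧ g 0 = r ∧ RayEquiv G f g :=
  stmt10_general G T r hle htree hnormal f hf

end Paper
end

section
/- Let G be a graph, N a nested set of separations of G, B an N-block, and C a connected component of G − B whose neighbourhood N(C) is finite. Then there exists X ∈ N with N(C) ⊆ ∂(X); consequently N(C) induces a complete subgraph in the torso of B. -/
namespace Paper

variable {V : Type*} {ι : Type*}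

/-- The separation `X` separates the vertices `u` and `w`. -/
def SepVerts (G : SimpleGraph V) (X : Set (Sym2 V)) (u w : V) : Prop :=
  (u ∈ edgeVerts X \ bdry G X ∧ w ∈ edgeVerts (ecompl G X) \ bdry G X) ∨
  (w ∈ edgeVerts X \ bdry G X ∧ u ∈ edgeVerts (ecompl G X) \ bdry G X)

/-- `B` is an `N`-block: a maximal set of vertices no two of which are separated
by a separation in `N`. -/
def IsBlock (G : SimpleGraph V) (N : Set (Set (Sym2 V))) (B : Set V) : Prop :=
  (∀ u ∈ B, ∀ w ∈ B, ∀ X ∈ N, ¬ SepVerts G X u w) ∧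
  ∀ B' : Set V, B ⊆ B' → (∀ u ∈ B', ∀ w ∈ B', ∀ X ∈ N, ¬ SepVerts G X u w) → B' = B

def nbhdSet (G : SimpleGraph V) (C : Set V) : Set V :=
  {v | v ∉ C ∧ ∃ u ∈ C, G.Adj u v}

/-!
Every vertex outside the `N`-block `B` lies in the interior `intr G Y` (the vertices with an edge
and all their edges in `Y`) of a side `Y` of a separation in `N` whose interior misses `B` while the interior of the other side meets `B`: otherwise adding the
vertex to `B` would give a larger set in which no two vertices are separated. By nestedness two
such sides are comparable or disjoint, so along a walk in `C` the side containing the current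
vertex in its interior can be enlarged step by step. As `N(C)` is finite, this yields one such
side `Y` with a vertex of `C` in its interior and an edge at every vertex of `N(C)`; since
`N(C) ⊆ B` avoids the interior of `Y`, it lies in `∂(Y)`.
-/

section Sides

variable {G : SimpleGraph V} {X Y : Set (Sym2 V)} {u w : V}

lemma edgeVerts_mono (h : X ⊆ Y) : edgeVerts X ⊆ edgeVerts Y :=
  fun _ ⟨e, he, hve⟩ => ⟨e, h he, hve⟩

lemma ecompl_subset_edgeSet : ecompl G X ⊆ G.edgeSet := Set.sdiff_subset

lemma ecompl_ecompl (hX : X ⊆ G.edgeSet) : ecompl G (ecompl G X) = X :=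
  Set.sdiff_sdiff_cancel_left hX

lemma ecompl_subset_comm : ecompl G X ⊆ Y ↔ ecompl G Y ⊆ X := Set.sdiff_subset_comm

lemma subset_ecompl_comm (hX : X ⊆ G.edgeSet) (hY : Y ⊆ G.edgeSet) :
    X ⊆ ecompl G Y ↔ Y ⊆ ecompl G X := by
  simp only [ecompl, Set.subset_sdiff, hX, hY, true_and, disjoint_comm]

lemma bdry_ecompl (hX : X ⊆ G.edgeSet) : bdry G (ecompl G X) = bdry G X := by
  ext v
  simp only [bdry, ecompl_ecompl hX]
  exact and_comm

lemma nested_comm (hX : X ⊆ G.edgeSet) (hY : Y ⊆ G.edgeSet) : Nested G X Y ↔ Nested G Y X := by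
  unfold Nested
  rw [ecompl_subset_comm, subset_ecompl_comm hX hY]
  tauto

lemma nested_ecompl_left (hX : X ⊆ G.edgeSet) : Nested G (ecompl G X) Y ↔ Nested G X Y := by
  unfold Nested
  rw [ecompl_ecompl hX]
  tauto

lemma nested_ecompl_right (hX : X ⊆ G.edgeSet) (hY : Y ⊆ G.edgeSet) :
    Nested G X (ecompl G Y) ↔ Nested G X Y := by
  rw [nested_comm hX ecompl_subset_edgeSet, nested_ecompl_left hY, nested_comm hY hX]

def intr (G : SimpleGraph V) (X : Set (Sym2 V)) : Set V := edgeVerts X \ bdry G X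

lemma mem_intr_iff {v : V} :
    v ∈ intr G X ↔ (∃ e ∈ X, v ∈ e) ∧ ∀ e ∈ G.edgeSet, v ∈ e → e ∈ X := by
  simp only [intr, edgeVerts, bdry, ecompl, Set.mem_sdiff, Set.mem_ofPred_eq]
  constructor
  · rintro ⟨hv, hnot⟩
    exact ⟨hv, fun e he hve => by_contra fun heX => hnot ⟨hv, e, ⟨he, heX⟩, hve⟩⟩
  · rintro ⟨hv, hall⟩
    exact ⟨hv, fun ⟨_, e, ⟨he, heX⟩, hve⟩ => heX (hall e he hve)⟩

lemma intr_mono (h : X ⊆ Y) : intr G X ⊆ intr G Y := by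
  intro v hv
  obtain ⟨⟨e, he, hve⟩, hall⟩ := mem_intr_iff.1 hv
  exact mem_intr_iff.2 ⟨⟨e, h he, hve⟩, fun e' he' hve' => h (hall e' he' hve')⟩

lemma sepVerts_iff (hX : X ⊆ G.edgeSet) :
    SepVerts G X u w ↔ (u ∈ intr G X ∧ w ∈ intr G (ecompl G X)) ∨
      (w ∈ intr G X ∧ u ∈ intr G (ecompl G X)) := by
  simp only [SepVerts, intr, bdry_ecompl hX]

lemma sepVerts_ecompl_iff (hX : X ⊆ G.edgeSet) :
    SepVerts G (ecompl G X) u w ↔ SepVerts G X u w := by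
  rw [sepVerts_iff ecompl_subset_edgeSet, sepVerts_iff hX, ecompl_ecompl hX]
  tauto

lemma not_sepVerts_self : ¬ SepVerts G X u u := by
  rintro (⟨⟨hX, hbd⟩, hXc, -⟩ | ⟨⟨hX, hbd⟩, hXc, -⟩) <;> exact hbd ⟨hX, hXc⟩

end Sides

def IsOuterSide (G : SimpleGraph V) (N : Set (Set (Sym2 V))) (B : Set V)
    (Y : Set (Sym2 V)) : Prop :=
  (∃ X ∈ N, Y = X ∨ Y = ecompl G X) ∧ Disjoint B (intr G Y) ∧
    (B ∩ intr G (ecompl G Y)).Nonempty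

section OuterSides

variable {G : SimpleGraph V} {N : Set (Set (Sym2 V))} {B : Set V} {Y Y' : Set (Sym2 V)}

lemma IsOuterSide.subset_or_subset_or_subset_ecompl
    (hsub : ∀ X ∈ N, X ⊆ G.edgeSet) (hnested : ∀ X ∈ N, ∀ Y ∈ N, Nested G X Y)
    (hY : IsOuterSide G N B Y) (hY' : IsOuterSide G N B Y') :
    Y ⊆ Y' ∨ Y' ⊆ Y ∨ Y' ⊆ ecompl G Y := by
  obtain ⟨⟨X, hX, hYX⟩, -, b, hbB, hbY⟩ := hY
  obtain ⟨⟨X', hX', hYX'⟩, hBY', -⟩ := hY'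
  have hnest : Nested G Y Y' := by
    rcases hYX with rfl | rfl <;> rcases hYX' with rfl | rfl <;>
      simp only [nested_ecompl_left (hsub _ hX),
        nested_ecompl_right (hsub _ hX) (hsub _ hX'), hnested _ hX _ hX']
  rcases hnest with h | h | h | h
  · exact Or.inl h
  · exact absurd (intr_mono h hbY) (Set.disjoint_left.1 hBY' hbB)
  · exact Or.inr (Or.inl h)
  · exact Or.inr (Or.inr h)

lemma isOuterSide_of_mem_intr_ecompl (hsub : ∀ X ∈ N, X ⊆ G.edgeSet) (hB : IsBlock G N B)
    (hYN : ∃ X ∈ N, Y = X ∨ Y = ecompl G X) {b : V} (hb : b ∈ B)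
    (hbY : b ∈ intr G (ecompl G Y)) : IsOuterSide G N B Y := by
  refine ⟨hYN, Set.disjoint_left.2 fun b' hb' hb'Y => ?_, b, hb, hbY⟩
  obtain ⟨X, hX, hYX⟩ := hYN
  rcases hYX with rfl | rfl
  · exact hB.1 b' hb' b hb Y hX ((sepVerts_iff (hsub Y hX)).2 (Or.inl ⟨hb'Y, hbY⟩))
  · refine hB.1 b' hb' b hb X hX ((sepVerts_ecompl_iff (hsub X hX)).1 ?_)
    exact (sepVerts_iff ecompl_subset_edgeSet).2 (Or.inl ⟨hb'Y, hbY⟩)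

lemma exists_isOuterSide_of_notMem (hsub : ∀ X ∈ N, X ⊆ G.edgeSet) (hB : IsBlock G N B)
    {p : V} (hp : p ∉ B) : ∃ Y, IsOuterSide G N B Y ∧ p ∈ intr G Y := by
  by_contra! hnone
  have hsep : ∀ X ∈ N, ∀ b ∈ B, ¬ SepVerts G X p b := by
    intro X hX b hb hpb
    have hXE := hsub X hX
    rcases (sepVerts_iff hXE).1 hpb with ⟨hpX, hbX⟩ | ⟨hbX, hpX⟩
    · exact hnone X (isOuterSide_of_mem_intr_ecompl hsub hB ⟨X, hX, Or.inl rfl⟩ hb hbX) hpX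
    · refine hnone (ecompl G X)
        (isOuterSide_of_mem_intr_ecompl hsub hB ⟨X, hX, Or.inr rfl⟩ hb ?_) hpX
      rwa [ecompl_ecompl hXE]
  refine hp (hB.2 (insert p B) (Set.subset_insert p B) ?_ ▸ Set.mem_insert p B)
  rintro u (rfl | hu) w (rfl | hw) X hX huw
  · exact not_sepVerts_self huw
  · exact hsep X hX w hw huw
  · exact hsep X hX u hu huw.symm
  · exact hB.1 u hu w hw X hX huw

lemma IsOuterSide.exists_superset_of_adj (hsub : ∀ X ∈ N, X ⊆ G.edgeSet)
    (hnested : ∀ X ∈ N, ∀ Y ∈ N, Nested G X Y) (hB : IsBlock G N B)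
    (hY : IsOuterSide G N B Y) {a b : V} (ha : a ∈ intr G Y) (hab : G.Adj a b) (hb : b ∉ B) :
    ∃ Y', IsOuterSide G N B Y' ∧ Y ⊆ Y' ∧ b ∈ intr G Y' := by
  by_cases hbY : b ∈ intr G Y
  · exact ⟨Y, hY, subset_rfl, hbY⟩
  obtain ⟨Y', hY', hbY'⟩ := exists_isOuterSide_of_notMem hsub hB hb
  have habY : s(a, b) ∈ Y := (mem_intr_iff.1 ha).2 _ hab (Sym2.mem_mk_left a b)
  have habY' : s(a, b) ∈ Y' := (mem_intr_iff.1 hbY').2 _ hab (Sym2.mem_mk_right a b)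
  rcases hY.subset_or_subset_or_subset_ecompl hsub hnested hY' with h | h | h
  · exact ⟨Y', hY', h, hbY'⟩
  · exact absurd (intr_mono h hbY') hbY
  · exact absurd habY (h habY').2

lemma IsOuterSide.exists_superset_of_walk (hsub : ∀ X ∈ N, X ⊆ G.edgeSet)
    (hnested : ∀ X ∈ N, ∀ Y ∈ N, Nested G X Y) (hB : IsBlock G N B)
    {c d : V} (W : G.Walk c d) (hW : ∀ x ∈ W.support, x ∉ B)
    (hY : IsOuterSide G N B Y) (hc : c ∈ intr G Y) :
    ∃ Y', IsOuterSide G N B Y' ∧ Y ⊆ Y' ∧ d ∈ intr G Y' := by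
  induction W generalizing Y with
  | nil => exact ⟨Y, hY, subset_rfl, hc⟩
  | cons hab W ih =>
    rw [SimpleGraph.Walk.support_cons, List.forall_mem_cons] at hW
    obtain ⟨Y₁, hY₁, hYY₁, hb⟩ :=
      hY.exists_superset_of_adj hsub hnested hB hc hab (hW.2 _ W.start_mem_support)
    obtain ⟨Y₂, hY₂, hY₁Y₂, hd⟩ := ih hW.2 hY₁ hb
    exact ⟨Y₂, hY₂, hYY₁.trans hY₁Y₂, hd⟩

end OuterSides

section Components

variable {G : SimpleGraph V} {S C : Set V}

lemma IsCompOutside.exists_mem (hC : IsCompOutside G S C) : ∃ v ∈ C, v ∉ S := by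
  obtain ⟨v, hv, rfl⟩ := hC
  refine ⟨v, ⟨SimpleGraph.Walk.nil, ?_⟩, hv⟩
  simpa using hv

lemma IsCompOutside.reachOutside (hC : IsCompOutside G S C) {a b : V} (ha : a ∈ C)
    (hb : b ∈ C) : ReachOutside G S a b := by
  obtain ⟨v, -, rfl⟩ := hC
  obtain ⟨p, hp⟩ := ha
  obtain ⟨q, hq⟩ := hb
  refine ⟨p.append q.reverse, fun x hx => ?_⟩
  rw [SimpleGraph.Walk.mem_support_append_iff, SimpleGraph.Walk.support_reverse,
    List.mem_reverse] at hx
  exact hx.elim (hp x) (hq x)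

lemma IsCompOutside.nbhdSet_subset (hC : IsCompOutside G S C) : nbhdSet G C ⊆ S := by
  obtain ⟨v, -, rfl⟩ := hC
  rintro w ⟨hwC, u, ⟨p, hp⟩, huw⟩
  by_contra hwS
  refine hwC ⟨SimpleGraph.Walk.cons huw.symm p, fun x hx => ?_⟩
  rw [SimpleGraph.Walk.support_cons, List.mem_cons] at hx
  exact hx.elim (· ▸ hwS) (hp x)

end Components

lemma exists_isOuterSide_subset_edgeVerts {G : SimpleGraph V} {N : Set (Set (Sym2 V))}
    {B C : Set V} (hsub : ∀ X ∈ N, X ⊆ G.edgeSet) (hnested : ∀ X ∈ N, ∀ Y ∈ N, Nested G X Y)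
    (hB : IsBlock G N B) (hC : IsCompOutside G B C) {T : Set V} (hT : T.Finite)
    (hTC : T ⊆ nbhdSet G C) :
    ∃ Y, IsOuterSide G N B Y ∧ (C ∩ intr G Y).Nonempty ∧ T ⊆ edgeVerts Y := by
  induction T, hT using Set.Finite.induction_on with
  | empty =>
    obtain ⟨v, hvC, hvB⟩ := hC.exists_mem
    obtain ⟨Y, hY, hvY⟩ := exists_isOuterSide_of_notMem hsub hB hvB
    exact ⟨Y, hY, ⟨v, hvC, hvY⟩, Set.empty_subset _⟩
  | @insert x T _ _ ih =>
    obtain ⟨Y, hY, ⟨c, hcC, hcY⟩, hTY⟩ := ih ((Set.subset_insert x T).trans hTC)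
    obtain ⟨-, u, huC, hux⟩ := hTC (Set.mem_insert x T)
    obtain ⟨W, hW⟩ := hC.reachOutside hcC huC
    obtain ⟨Y', hY', hYY', huY'⟩ := hY.exists_superset_of_walk hsub hnested hB W hW hcY
    have huxY' : s(u, x) ∈ Y' := (mem_intr_iff.1 huY').2 _ hux (Sym2.mem_mk_left u x)
    refine ⟨Y', hY', ⟨u, huC, huY'⟩, Set.insert_subset ⟨_, huxY', Sym2.mem_mk_right u x⟩ ?_⟩
    exact hTY.trans (edgeVerts_mono hYY')

theorem stmt17_general (G : SimpleGraph V) (N : Set (Set (Sym2 V)))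
    (hsub : ∀ X ∈ N, X ⊆ G.edgeSet)
    (hnested : ∀ X ∈ N, ∀ Y ∈ N, Nested G X Y)
    (B : Set V) (hB : IsBlock G N B)
    (C : Set V) (hC : IsCompOutside G B C)
    (hNC : (nbhdSet G C).Finite) :
    (∃ X ∈ N, nbhdSet G C ⊆ bdry G X) ∧
    ∀ x ∈ nbhdSet G C, ∀ y ∈ nbhdSet G C, x ≠ y →
      (G.Adj x y ∨ ∃ X ∈ N, x ∈ bdry G X ∧ y ∈ bdry G X) := by
  obtain ⟨Y, ⟨⟨X, hX, hYX⟩, hBY, -⟩, -, hNY⟩ :=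
    exists_isOuterSide_subset_edgeVerts hsub hnested hB hC hNC subset_rfl
  have hNbdry : nbhdSet G C ⊆ bdry G Y := fun w hw => by
    by_contra hwY
    exact Set.disjoint_left.1 hBY (hC.nbhdSet_subset hw) ⟨hNY hw, hwY⟩
  have hNX : nbhdSet G C ⊆ bdry G X := by
    rcases hYX with rfl | rfl
    · exact hNbdry
    · rwa [bdry_ecompl (hsub X hX)] at hNbdry
  exact ⟨⟨X, hX, hNX⟩, fun x hx y hy _ => Or.inr ⟨X, hX, hNX hx, hNX hy⟩⟩

theorem stmt17 (G : SimpleGraph V) (N : Set (Set (Sym2 V)))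
    (hsub : ∀ X ∈ N, X ⊆ G.edgeSet)
    (hfin : ∀ X ∈ N, (bdry G X).Finite)
    (hnested : ∀ X ∈ N, ∀ Y ∈ N, Nested G X Y)
    (B : Set V) (hB : IsBlock G N B)
    (C : Set V) (hC : IsCompOutside G B C)
    (hNC : (nbhdSet G C).Finite) :
    (∃ X ∈ N, nbhdSet G C ⊆ bdry G X) ∧
    ∀ x ∈ nbhdSet G C, ∀ y ∈ nbhdSet G C, x ≠ y →
      (G.Adj x y ∨ ∃ X ∈ N, x ∈ bdry G X ∧ y ∈ bdry G X) :=
  stmt17_general G N hsub hnested B hB C hC hNC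

end Paper
end
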